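/- Let p ≥ 5 be a prime. The algebra Θ is a free module over its subalgebra F_p[μ] with basis given by the following elements: u^i for 0 ≤ i ≤ p−2; u^i·a_j for 0 ≤ i ≤ p−3 and 0 ≤ j ≤ p−1; u^{p−2}·a_{p−1}; and u^i·b_j for 0 ≤ i ≤ p−3 and 1 ≤ j ≤ p−1. -/

import Mathlib

noncomputable section

/-- Generators of Ausoni's algebra `Θ`: `u`, `μ`, `a_0, …, a_{p-1}` and
`b_0, …, b_{p-1}` (with `b_0` identified with `u` by a relation). -/
inductive ThetaGen (p : ℕ) : Type
  | u : ThetaGen p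
  | mu : ThetaGen p
  | a : Fin p → ThetaGen p
  | b : Fin p → ThetaGen p

open MvPolynomial in
/-- The defining relations of Ausoni's algebra `Θ`. -/
def thetaRels (p : ℕ) [NeZero p] : Set (MvPolynomial (ThetaGen p) (ZMod p)) :=
  {q | -- the convention b_0 = u
       q = X (ThetaGen.b 0) - X ThetaGen.u ∨
       -- u^{p-1} = 0
       q = X (ThetaGen.u) ^ (p - 1) ∨
       -- u^{p-2}·a_i = 0 for 0 ≤ i ≤ p-2
       (∃ i : Fin p, (i : ℕ) ≤ p - 2 ∧ q = X ThetaGen.u ^ (p - 2) * X (ThetaGen.a i)) ∨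
       -- u^{p-2}·b_j = 0 for 1 ≤ j ≤ p-1
       (∃ j : Fin p, 1 ≤ (j : ℕ) ∧ q = X ThetaGen.u ^ (p - 2) * X (ThetaGen.b j)) ∨
       -- b_i·b_j = u·b_{i+j} for 1 ≤ i, j ≤ p-1 with i + j ≤ p-1
       (∃ i j k : Fin p, 1 ≤ (i : ℕ) ∧ 1 ≤ (j : ℕ) ∧ (i : ℕ) + (j : ℕ) ≤ p - 1 ∧
          (k : ℕ) = (i : ℕ) + (j : ℕ) ∧
          q = X (ThetaGen.b i) * X (ThetaGen.b j) - X ThetaGen.u * X (ThetaGen.b k)) ∨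
       -- a_i·b_j = u·a_{i+j} for 1 ≤ j ≤ p-1 with i + j ≤ p-1
       (∃ i j k : Fin p, 1 ≤ (j : ℕ) ∧ (i : ℕ) + (j : ℕ) ≤ p - 1 ∧
          (k : ℕ) = (i : ℕ) + (j : ℕ) ∧
          q = X (ThetaGen.a i) * X (ThetaGen.b j) - X ThetaGen.u * X (ThetaGen.a k)) ∨
       -- b_i·b_j = u·μ·b_{i+j-p} for 1 ≤ i, j ≤ p-1 with i + j ≥ p
       (∃ i j k : Fin p, 1 ≤ (i : ℕ) ∧ 1 ≤ (j : ℕ) ∧ p ≤ (i : ℕ) + (j : ℕ) ∧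
          (k : ℕ) + p = (i : ℕ) + (j : ℕ) ∧
          q = X (ThetaGen.b i) * X (ThetaGen.b j) -
              X ThetaGen.u * X ThetaGen.mu * X (ThetaGen.b k)) ∨
       -- a_i·b_j = u·μ·a_{i+j-p} for 1 ≤ j ≤ p-1 with i + j ≥ p
       (∃ i j k : Fin p, 1 ≤ (j : ℕ) ∧ p ≤ (i : ℕ) + (j : ℕ) ∧
          (k : ℕ) + p = (i : ℕ) + (j : ℕ) ∧
          q = X (ThetaGen.a i) * X (ThetaGen.b j) -
              X ThetaGen.u * X ThetaGen.mu * X (ThetaGen.a k)) ∨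
       -- a_i·a_j = 0
       (∃ i j : Fin p, q = X (ThetaGen.a i) * X (ThetaGen.a j)) }

/-- Ausoni's commutative `F_p`-algebra `Θ`, presented by generators and relations. -/
def Theta (p : ℕ) [NeZero p] : Type :=
  MvPolynomial (ThetaGen p) (ZMod p) ⧸ Ideal.span (thetaRels p)

noncomputable instance (p : ℕ) [NeZero p] : CommRing (Theta p) :=
  Ideal.Quotient.commRing _

noncomputable instance (p : ℕ) [NeZero p] : Algebra (ZMod p) (Theta p) :=
  Ideal.Quotient.algebra _

/-- The generator `u` of `Θ`. -/
def thetaU (p : ℕ) [NeZero p] : Theta p :=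
  Ideal.Quotient.mk _ (MvPolynomial.X ThetaGen.u)

/-- The generator `μ` of `Θ`. -/
def thetaMu (p : ℕ) [NeZero p] : Theta p :=
  Ideal.Quotient.mk _ (MvPolynomial.X ThetaGen.mu)

/-- The generators `a_i` of `Θ`. -/
def thetaA (p : ℕ) [NeZero p] (i : Fin p) : Theta p :=
  Ideal.Quotient.mk _ (MvPolynomial.X (ThetaGen.a i))

/-- The generators `b_j` of `Θ`. -/
def thetaB (p : ℕ) [NeZero p] (j : Fin p) : Theta p :=
  Ideal.Quotient.mk _ (MvPolynomial.X (ThetaGen.b j))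

/-- Index type for the asserted `F_p[μ]`-basis of `Θ`: the elements `u^i` (`0 ≤ i ≤ p-2`),
`u^i·a_j` (`0 ≤ i ≤ p-3`, `0 ≤ j ≤ p-1`), `u^{p-2}·a_{p-1}`, and `u^i·b_j`
(`0 ≤ i ≤ p-3`, `1 ≤ j ≤ p-1`). -/
def ThetaBasisIndex (p : ℕ) : Type :=
  {i : ℕ // i ≤ p - 2} ⊕ ({i : ℕ // i ≤ p - 3} × Fin p) ⊕ Unit ⊕
    ({i : ℕ // i ≤ p - 3} × {j : Fin p // 1 ≤ (j : ℕ)})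


set_option linter.unusedSectionVars false
set_option linter.unnecessarySeqFocus false
namespace Aux

lemma modadd {p : ℕ} (hp : 0 < p) (k k' : ℕ) :
    (k + k') % p = k % p + k' % p ∨ (k + k') % p + p = k % p + k' % p := by
  have h1 := Nat.add_mod k k' p
  have h2 : k % p < p := Nat.mod_lt _ hp
  have h3 : k' % p < p := Nat.mod_lt _ hp
  rcases Nat.lt_or_ge (k % p + k' % p) p with h | h
  · left; rw [h1, Nat.mod_eq_of_lt h]
  · right
    have : (k % p + k' % p) % p = k % p + k' % p - p := by
      rw [Nat.mod_eq_sub_mod h, Nat.mod_eq_of_lt (by omega)]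
    omega

@[reducible] def MonV (p : ℕ) (e : Bool) (i k : ℕ) : Prop :=
  if e then i ≤ p - 3 ∨ (i = p - 2 ∧ k % p = p - 1)
  else i ≤ p - 2 ∧ (k % p = 0 ∨ 1 ≤ i)

instance (p : ℕ) (e : Bool) (i k : ℕ) : Decidable (MonV p e i k) := by
  unfold MonV; exact inferInstance

lemma monV_true {p i k} : MonV p true i k ↔ (i ≤ p - 3 ∨ (i = p - 2 ∧ k % p = p - 1)) := by
  simp [MonV]

lemma monV_false {p i k} : MonV p false i k ↔ (i ≤ p - 2 ∧ (k % p = 0 ∨ 1 ≤ i)) := by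
  simp [MonV]

def MonW (p : ℕ) (e : Bool) (i k : ℕ) : Prop :=
  e = true ∨ k % p = 0 ∨ 1 ≤ i

section arith
variable {p : ℕ} [Fact (5 ≤ p)]

lemma hp5 : 5 ≤ p := Fact.out
lemma hp0 : 0 < p := by have := hp5 (p := p); omega

lemma MonV.w {e i k} (h : MonV p e i k) : MonW p e i k := by
  cases e <;> simp [MonV, MonW] at * <;> tauto

lemma monW_add {e i k e' i' k'} (h : MonW p e i k) (h' : MonW p e' i' k') :
    MonW p (e || e') (i + i') (k + k') := by
  have hm := modadd (p := p) hp0 k k'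
  cases e <;> cases e' <;> simp [MonW] at * <;> omega

lemma absorb {e i k e' i' k'} (hw : MonW p e i k) (h' : MonV p e' i' k')
    (h : ¬ MonV p e i k) (hee : (e && e') = false) :
    ¬ MonV p (e || e') (i + i') (k + k') := by
  have hm := modadd (p := p) hp0 k k'
  have h5 : 5 ≤ p := hp5
  have b1 : k % p < p := Nat.mod_lt _ hp0
  have b2 : k' % p < p := Nat.mod_lt _ hp0
  have b3 : (k + k') % p < p := Nat.mod_lt _ hp0
  cases e <;> cases e' <;> simp_all [MonV, MonW] <;> omega
end arith

inductive Mon (p : ℕ) : Type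
  | zero : Mon p
  | el (e : Bool) (i k : ℕ) (h : MonV p e i k) : Mon p

namespace Mon
variable {p : ℕ}

lemma el_inj {e i k h e' i' k' h'} (H : (el e i k h : Mon p) = el e' i' k' h') :
    e = e' ∧ i = i' ∧ k = k' := by cases H; exact ⟨rfl, rfl, rfl⟩

lemma el_eq_el {e i k h e' i' k' h'} (he : e = e') (hi : i = i') (hk : k = k') :
    (el e i k h : Mon p) = el e' i' k' h' := by subst he; subst hi; subst hk; rfl

def norm (p : ℕ) (e : Bool) (i k : ℕ) : Mon p :=
  if h : MonV p e i k then el e i k h else zero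

lemma norm_eq_el {e i k} (h : MonV p e i k) : norm p e i k = el e i k h := dif_pos h
lemma norm_eq_zero {e i k} (h : ¬ MonV p e i k) : (norm p e i k : Mon p) = zero := dif_neg h

def mul : Mon p → Mon p → Mon p
  | zero, _ => zero
  | el _ _ _ _, zero => zero
  | el e i k _, el e' i' k' _ =>
      if e && e' then zero else norm p (e || e') (i + i') (k + k')

instance : Mul (Mon p) := ⟨mul⟩

@[simp] lemma zero_mul (x : Mon p) : (zero : Mon p) * x = zero := rfl
@[simp] lemma mul_zero (x : Mon p) : x * (zero : Mon p) = zero := by cases x <;> rfl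
lemma el_mul_el {e i k h e' i' k' h'} :
    (el e i k h : Mon p) * el e' i' k' h' =
      if e && e' then zero else norm p (e || e') (i + i') (k + k') := rfl

lemma el_mul_el_valid {e i k h e' i' k' h'} (hee : (e && e') = false)
    (hv : MonV p (e || e') (i + i') (k + k')) :
    (el e i k h : Mon p) * el e' i' k' h' = el (e || e') (i + i') (k + k') hv := by
  rw [el_mul_el, if_neg (by simp [hee]), norm_eq_el]

instance : One (Mon p) := ⟨el false 0 0 (by simp [MonV])⟩
lemma one_def : (1 : Mon p) = el false 0 0 (by simp [MonV]) := rfl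

variable [Fact (5 ≤ p)]

/-- Multiplying a normalization (of weakly-valid data) by a valid element. -/
lemma norm_mul_el {e i k e' i' k' h'} (hw : MonW p e i k) :
    (norm p e i k : Mon p) * el e' i' k' h' =
      if e && e' then zero else norm p (e || e') (i + i') (k + k') := by
  by_cases h : MonV p e i k
  · rw [norm_eq_el h, el_mul_el]
  · rw [norm_eq_zero h, zero_mul]
    by_cases hee : (e && e') = true
    · rw [if_pos hee]
    · rw [if_neg hee, norm_eq_zero (absorb hw h' h (by simpa using hee))]

lemma el_mul_norm {e i k h e' i' k'} (hw : MonW p e' i' k') :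
    (el e i k h : Mon p) * norm p e' i' k' =
      if e && e' then zero else norm p (e || e') (i + i') (k + k') := by
  by_cases hv : MonV p e' i' k'
  · rw [norm_eq_el hv, el_mul_el]
  · rw [norm_eq_zero hv, mul_zero]
    by_cases hee : (e && e') = true
    · rw [if_pos hee]
    · rw [if_neg hee]
      have := absorb (p := p) hw h hv (by cases e <;> cases e' <;> simp_all)
      rw [Nat.add_comm i' i, Nat.add_comm k' k] at this
      rw [norm_eq_zero (by cases e <;> cases e' <;> simpa using this)]

protected lemma mul_comm (x y : Mon p) : x * y = y * x := by
  cases x with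
  | zero => simp
  | el e i k h =>
    cases y with
    | zero => simp
    | el e' i' k' h' =>
      rw [el_mul_el, el_mul_el, Bool.and_comm, Bool.or_comm, Nat.add_comm i' i,
        Nat.add_comm k' k]

protected lemma mul_assoc (x y z : Mon p) : x * y * z = x * (y * z) := by
  cases x with
  | zero => simp
  | el e1 i1 k1 h1 =>
  cases y with
  | zero => simp
  | el e2 i2 k2 h2 =>
  cases z with
  | zero => simp
  | el e3 i3 k3 h3 =>
  rw [el_mul_el (h := h1), el_mul_el (h := h2)]
  by_cases h12 : (e1 && e2) = true
  · -- x*y = 0 ; and e1 = e2 = true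
    rw [if_pos h12, zero_mul]
    by_cases h23 : (e2 && e3) = true
    · rw [if_pos h23, mul_zero]
    · rw [if_neg h23]
      have he1 : e1 = true := by cases e1 <;> simp_all
      have : (e1 && (e2 || e3)) = true := by cases e2 <;> cases e3 <;> simp_all
      rw [el_mul_norm (monW_add h2.w h3.w), if_pos this]
  · rw [if_neg h12]
    by_cases h23 : (e2 && e3) = true
    · rw [if_pos h23, mul_zero]
      have : ((e1 || e2) && e3) = true := by cases e2 <;> cases e3 <;> simp_all
      rw [norm_mul_el (monW_add h1.w h2.w), if_pos this]
    · rw [if_neg h23, norm_mul_el (monW_add h1.w h2.w), el_mul_norm (monW_add h2.w h3.w)]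
      by_cases hA : ((e1 || e2) && e3) = true
      · rw [if_pos hA, if_pos (by cases e1 <;> cases e2 <;> cases e3 <;> simp_all)]
      · rw [if_neg hA, if_neg (by cases e1 <;> cases e2 <;> cases e3 <;> simp_all)]
        rw [Bool.or_assoc, Nat.add_assoc, Nat.add_assoc]

protected lemma one_mul (x : Mon p) : 1 * x = x := by
  cases x with
  | zero => simp [one_def]
  | el e i k h =>
    rw [one_def, el_mul_el_valid (by simp) (by simpa using h)]
    exact el_eq_el (by simp) (by simp) (by simp)

instance : CommMonoid (Mon p) where
  mul_assoc := Mon.mul_assoc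
  one_mul := Mon.one_mul
  mul_one := fun x => by rw [Mon.mul_comm]; exact Mon.one_mul x
  mul_comm := Mon.mul_comm

end Mon
end Aux

namespace Aux
variable {p : ℕ} [Fact (5 ≤ p)]

lemma kmod {j : ℕ} (hj : j < p) (m : ℕ) : (p * m + j) % p = j := by
  rw [Nat.mul_add_mod, Nat.mod_eq_of_lt hj]

lemma pm_decomp {m j m' j' : ℕ} (hj : j < p) (hj' : j' < p)
    (h : p * m + j = p * m' + j') : m = m' ∧ j = j' := by
  have h1 : j = j' := by
    have e1 := kmod (p := p) hj m
    have e2 := kmod (p := p) hj' m'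
    rw [← e1, ← e2, h]
  refine ⟨?_, h1⟩
  subst h1
  have hp : 0 < p := hp0
  have : p * m = p * m' := by omega
  exact Nat.eq_of_mul_eq_mul_left hp this

namespace Mon

/-- the monomial `u`. -/
def Um : Mon p := el false 1 0 (by have := hp5 (p := p); simp [MonV]; omega)
/-- the monomial `μ = t^p`. -/
def Mum : Mon p := el false 0 p (by have := hp5 (p := p); simp [MonV])
/-- the monomial `a_j = α t^j` (any `j : ℕ`). -/
def Am (j : ℕ) : Mon p := el true 0 j (by have := hp5 (p := p); simp [MonV])
/-- the monomial `b_j = u t^j` (any `j : ℕ`). -/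
def Bm (j : ℕ) : Mon p := el false 1 j (by have := hp5 (p := p); simp [MonV]; omega)

lemma Bm_zero : (Bm 0 : Mon p) = Um := rfl

lemma powU (n : ℕ) : (Um : Mon p) ^ n = norm p false n 0 := by
  induction n with
  | zero =>
    rw [pow_zero, norm_eq_el (by have := hp5 (p := p); simp [MonV])]; rfl
  | succ n ih =>
    rw [pow_succ, ih, Um, norm_mul_el (by simp [MonW])]
    simp

lemma powMu (m : ℕ) : (Mum : Mon p) ^ m = norm p false 0 (p * m) := by
  induction m with
  | zero =>
    rw [pow_zero, norm_eq_el (by have := hp5 (p := p); simp [MonV])]; rfl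
  | succ m ih =>
    rw [pow_succ, ih, Mum, norm_mul_el (by simp [MonW, Nat.mul_mod_right])]
    have : p * m + p = p * (m + 1) := by ring
    simp [this]

end Mon
end Aux

namespace Aux
open MonoidAlgebra

variable (p : ℕ) [NeZero p] [Fact (5 ≤ p)]

/-- Images of the generators in the monoid algebra model. -/
def gTheta : ThetaGen p → MonoidAlgebra (ZMod p) (Mon p)
  | ThetaGen.u => single (Mon.Um : Mon p) 1
  | ThetaGen.mu => single (Mon.Mum : Mon p) 1
  | ThetaGen.a i => single (Mon.Am i.1 : Mon p) 1
  | ThetaGen.b j => single (Mon.Bm j.1 : Mon p) 1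

/-- The model map on polynomials. -/
def Phi : MvPolynomial (ThetaGen p) (ZMod p) →ₐ[ZMod p] MonoidAlgebra (ZMod p) (Mon p) :=
  MvPolynomial.aeval (gTheta p)

variable {p}

namespace Mon

lemma mul_BB (i j : ℕ) : (Bm i : Mon p) * Bm j = norm p false 2 (i + j) := by
  rw [Bm, Bm, el_mul_el]; norm_num

lemma mul_AB (i j : ℕ) : (Am i : Mon p) * Bm j = norm p true 1 (i + j) := by
  rw [Am, Bm, el_mul_el]; norm_num

lemma mul_AA (i j : ℕ) : (Am i : Mon p) * Am j = Mon.zero := by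
  rw [Am, Am, el_mul_el]; norm_num

lemma mul_UB (k : ℕ) : (Um : Mon p) * Bm k = norm p false 2 k := by
  rw [Um, Bm, el_mul_el]; norm_num

lemma mul_UA (k : ℕ) : (Um : Mon p) * Am k = norm p true 1 k := by
  rw [Um, Am, el_mul_el]; norm_num

lemma mul_UMu : (Um : Mon p) * Mum = el false 1 p (by
    have := hp5 (p := p); simp [MonV, Nat.mod_self]; omega) := by
  rw [Um, Mum, el_mul_el_valid (by simp)
    (by have := hp5 (p := p); simp [MonV, Nat.mod_self]; omega)]
  exact el_eq_el rfl rfl (by omega)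

lemma mul_UMuB (k : ℕ) : (Um : Mon p) * Mum * Bm k = norm p false 2 (p + k) := by
  rw [mul_UMu, Bm, el_mul_el]; norm_num

lemma mul_UMuA (k : ℕ) : (Um : Mon p) * Mum * Am k = norm p true 1 (p + k) := by
  rw [mul_UMu, Am, el_mul_el]; norm_num

lemma powU_top : (Um : Mon p) ^ (p - 1) = Mon.zero := by
  have h5 := hp5 (p := p)
  rw [powU]
  exact norm_eq_zero (by rw [monV_false]; omega)

lemma powU_A {i : ℕ} (hi : i ≤ p - 2) : (Um : Mon p) ^ (p - 2) * Am i = Mon.zero := by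
  have h5 := hp5 (p := p)
  have him : i % p = i := Nat.mod_eq_of_lt (by omega)
  rw [powU, Am, norm_mul_el (by simp [MonW]), if_neg (by simp)]
  refine norm_eq_zero ?_
  simp only [Bool.false_or, Bool.or_false, Bool.or_self]
  rw [monV_true]
  simp only [Nat.add_zero, Nat.zero_add, him]
  omega

lemma powU_B (j : ℕ) : (Um : Mon p) ^ (p - 2) * Bm j = Mon.zero := by
  have h5 := hp5 (p := p)
  rw [powU, Bm, norm_mul_el (by simp [MonW]), if_neg (by simp)]
  refine norm_eq_zero ?_
  simp only [Bool.false_or, Bool.or_false, Bool.or_self]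
  rw [monV_false]
  omega

end Mon

lemma relmem (r : MvPolynomial (ThetaGen p) (ZMod p)) (hr : r ∈ thetaRels p) :
    Phi p r ∈ Ideal.span {single (Mon.zero : Mon p) (1 : ZMod p)} := by
  have hsub : (single (Mon.zero : Mon p) (1 : ZMod p)) ∈
      Ideal.span {single (Mon.zero : Mon p) (1 : ZMod p)} := Ideal.subset_span rfl
  have hp5' : 5 ≤ p := hp5
  obtain rfl | rfl | ⟨i, hi, rfl⟩ | ⟨j, hj, rfl⟩ | ⟨i, j, k, hi, hj, hs, hk, rfl⟩ |
      ⟨i, j, k, hj, hs, hk, rfl⟩ | ⟨i, j, k, hi, hj, hs, hk, rfl⟩ |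
      ⟨i, j, k, hj, hs, hk, rfl⟩ | ⟨i, j, rfl⟩ := hr
  · -- b_0 = u
    simp only [Phi, map_sub, MvPolynomial.aeval_X, gTheta]
    have : (0 : Fin p).1 = 0 := rfl
    rw [this, Mon.Bm_zero, sub_self]
    exact Ideal.zero_mem _
  · -- u^{p-1}
    simp only [Phi, map_pow, MvPolynomial.aeval_X, gTheta]
    rw [single_pow, Mon.powU_top, one_pow]
    exact hsub
  · -- u^{p-2} a_i
    simp only [Phi, map_mul, map_pow, MvPolynomial.aeval_X, gTheta]
    rw [single_pow, single_mul_single, Mon.powU_A hi, one_pow, one_mul]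
    exact hsub
  · -- u^{p-2} b_j
    simp only [Phi, map_mul, map_pow, MvPolynomial.aeval_X, gTheta]
    rw [single_pow, single_mul_single, Mon.powU_B, one_pow, one_mul]
    exact hsub
  · -- b_i b_j = u b_k
    simp only [Phi, map_sub, map_mul, MvPolynomial.aeval_X, gTheta]
    rw [single_mul_single, single_mul_single, Mon.mul_BB, Mon.mul_UB, ← hk, sub_self]
    exact Ideal.zero_mem _
  · -- a_i b_j = u a_k
    simp only [Phi, map_sub, map_mul, MvPolynomial.aeval_X, gTheta]
    rw [single_mul_single, single_mul_single, Mon.mul_AB, Mon.mul_UA, ← hk, sub_self]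
    exact Ideal.zero_mem _
  · -- b_i b_j = u μ b_k
    simp only [Phi, map_sub, map_mul, MvPolynomial.aeval_X, gTheta]
    rw [single_mul_single, single_mul_single, single_mul_single, Mon.mul_BB, Mon.mul_UMuB]
    have : p + k.1 = i.1 + j.1 := by omega
    rw [this]
    norm_num
  · -- a_i b_j = u μ a_k
    simp only [Phi, map_sub, map_mul, MvPolynomial.aeval_X, gTheta]
    rw [single_mul_single, single_mul_single, single_mul_single, Mon.mul_AB, Mon.mul_UMuA]
    have : p + k.1 = i.1 + j.1 := by omega
    rw [this]
    norm_num
  · -- a_i a_j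
    simp only [Phi, map_mul, MvPolynomial.aeval_X, gTheta]
    rw [single_mul_single, Mon.mul_AA, one_mul]
    exact hsub

end Aux

namespace Aux
open MonoidAlgebra

variable (p : ℕ) [NeZero p] [Fact (5 ≤ p)]

/-- Nonzero monomials. -/
abbrev Mon' := {x : Mon p // x ≠ Mon.zero}

/-- The projection of the monoid algebra onto the span of nonzero monomials. -/
def ell0 : MonoidAlgebra (ZMod p) (Mon p) →ₗ[ZMod p] (Mon' p →₀ ZMod p) where
  toFun f := f.coeff.subtypeDomain _
  map_add' x y := by rw [MonoidAlgebra.coeff_add]; exact Finsupp.subtypeDomain_add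
  map_smul' c f := by
    ext x
    rfl

variable {p}

lemma ell0_single_zero (c : ZMod p) : ell0 p (single (Mon.zero : Mon p) c) = 0 := by
  ext x
  classical
  simp only [ell0, LinearMap.coe_mk, AddHom.coe_mk, Finsupp.subtypeDomain_apply,
    Finsupp.coe_zero, Pi.zero_apply, MonoidAlgebra.coeff_single]
  rw [Finsupp.single_apply, if_neg (fun h => x.2 h.symm)]

lemma ell0_single {x : Mon p} (hx : x ≠ Mon.zero) (c : ZMod p) :
    ell0 p (single x c) = Finsupp.single (⟨x, hx⟩ : Mon' p) c := by
  ext y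
  classical
  simp only [ell0, LinearMap.coe_mk, AddHom.coe_mk, Finsupp.subtypeDomain_apply,
    MonoidAlgebra.coeff_single]
  rw [Finsupp.single_apply, Finsupp.single_apply]
  by_cases h : x = y.1
  · rw [if_pos h, if_pos (Subtype.ext h)]
  · rw [if_neg h, if_neg (fun hh => h (congrArg Subtype.val hh))]

/-- `ell0 ∘ Phi` kills the ideal of relations. -/
lemma ell0_Phi_ideal {x : MvPolynomial (ThetaGen p) (ZMod p)}
    (hx : x ∈ Ideal.span (thetaRels p)) : ell0 p (Phi p x) = 0 := by
  have h1 : Ideal.span (thetaRels p) ≤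
      Ideal.comap (Phi p) (Ideal.span {single (Mon.zero : Mon p) (1 : ZMod p)}) := by
    rw [Ideal.span_le]
    intro r hr
    exact relmem r hr
  have h2 : Phi p x ∈ Ideal.span {single (Mon.zero : Mon p) (1 : ZMod p)} := h1 hx
  rw [Ideal.mem_span_singleton] at h2
  obtain ⟨c, hc⟩ := h2
  rw [hc]
  -- single zero 1 * c = single zero d for some d
  have : ∀ c : MonoidAlgebra (ZMod p) (Mon p),
      ∃ d, single (Mon.zero : Mon p) (1 : ZMod p) * c = single (Mon.zero : Mon p) d := by
    intro c
    induction c using MonoidAlgebra.induction with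
    | zero => exact ⟨0, by simp⟩
    | single_add a b f _ _ ih =>
      obtain ⟨d, hd⟩ := ih
      refine ⟨b + d, ?_⟩
      have : (single a b : MonoidAlgebra (ZMod p) (Mon p)) = MonoidAlgebra.single a b := rfl
      rw [mul_add, hd, MonoidAlgebra.single_mul_single, one_mul]
      simp [MonoidAlgebra.single_add]
  obtain ⟨d, hd⟩ := this c
  rw [hd, ell0_single_zero]

end Aux

namespace Aux
open MonoidAlgebra

variable (p : ℕ) [NeZero p] [Fact (5 ≤ p)]

/-- The basis monomials in the model. -/
def monFam : ThetaBasisIndex p → ℕ → Mon p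
  | Sum.inl i, m => Mon.el false i.1 (p * m)
      (by rw [monV_false]; exact ⟨i.2, Or.inl (Nat.mul_mod_right p m)⟩)
  | Sum.inr (Sum.inl x), m => Mon.el true x.1.1 (p * m + x.2.1)
      (by rw [monV_true]; exact Or.inl x.1.2)
  | Sum.inr (Sum.inr (Sum.inl _)), m => Mon.el true (p - 2) (p * m + (p - 1))
      (by
        rw [monV_true]
        refine Or.inr ⟨rfl, ?_⟩
        have hp' := hp0 (p := p)
        exact kmod (by omega) m)
  | Sum.inr (Sum.inr (Sum.inr x)), m => Mon.el false (x.1.1 + 1) (p * m + x.2.1.1)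
      (by
        rw [monV_false]
        have h5 := hp5 (p := p)
        have hx := x.1.2
        exact ⟨by omega, Or.inr (by omega)⟩)

variable {p}

lemma monFam_ne_zero (j : ThetaBasisIndex p) (m : ℕ) : monFam p j m ≠ Mon.zero := by
  rcases j with i | x | u | x <;> exact fun h => by cases h

lemma monFam_inj :
    Function.Injective (fun jm : ThetaBasisIndex p × ℕ => monFam p jm.1 jm.2) := by
  have h5 := hp5 (p := p)
  have hp' := hp0 (p := p)
  rintro ⟨j, m⟩ ⟨j', m'⟩ h
  simp only at h
  rcases j with ⟨i, hi⟩ | ⟨⟨i, hi⟩, jf⟩ | _ | ⟨⟨i, hi⟩, jf, hjf⟩ <;>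
    rcases j' with ⟨i', hi'⟩ | ⟨⟨i', hi'⟩, jf'⟩ | _ | ⟨⟨i', hi'⟩, jf', hjf'⟩ <;>
    simp only [monFam] at h <;>
    obtain ⟨he, hii, hk⟩ := Mon.el_inj h
  · -- u/u
    have hm : m = m' := Nat.eq_of_mul_eq_mul_left hp' hk
    subst hm; subst hii; rfl
  · -- u/a
    exact absurd he (by simp)
  · exact absurd he (by simp)
  · -- u/b
    obtain ⟨-, h0⟩ := pm_decomp (p := p) hp' jf'.isLt
      (by omega : p * m + 0 = p * m' + jf'.1)
    omega
  · exact absurd he (by simp)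
  · -- a/a
    obtain ⟨hm, hj⟩ := pm_decomp (p := p) jf.isLt jf'.isLt hk
    subst hm; subst hii
    have : jf = jf' := Fin.ext hj
    subst this; rfl
  · -- a/atop
    omega
  · exact absurd he (by simp)
  · exact absurd he (by simp)
  · -- atop/a
    omega
  · -- atop/atop
    obtain ⟨hm, -⟩ := pm_decomp (p := p) (by omega) (by omega) hk
    subst hm; rfl
  · exact absurd he (by simp)
  · -- b/u
    obtain ⟨-, h0⟩ := pm_decomp (p := p) jf.isLt hp'
      (by omega : p * m + jf.1 = p * m' + 0)
    omega
  · exact absurd he (by simp)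
  · exact absurd he (by simp)
  · -- b/b
    obtain ⟨hm, hj⟩ := pm_decomp (p := p) jf.isLt jf'.isLt hk
    subst hm
    have hi2 : i = i' := by omega
    subst hi2
    have : jf = jf' := Fin.ext hj
    subst this; rfl

namespace Mon

lemma powU_el {n : ℕ} (hn : n ≤ p - 2) :
    (Um : Mon p) ^ n = el false n 0 (by rw [monV_false]; exact ⟨hn, Or.inl (Nat.zero_mod p)⟩) := by
  rw [powU, norm_eq_el]

lemma powMu_el (m : ℕ) :
    (Mum : Mon p) ^ m = el false 0 (p * m)
      (by rw [monV_false]; exact ⟨Nat.zero_le _, Or.inl (Nat.mul_mod_right p m)⟩) := by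
  rw [powMu, norm_eq_el]

end Mon

variable (p)

open MvPolynomial in
/-- The basis monomials as polynomials. -/
def XMon : ThetaBasisIndex p → ℕ → MvPolynomial (ThetaGen p) (ZMod p)
  | Sum.inl i, m => X ThetaGen.mu ^ m * X ThetaGen.u ^ i.1
  | Sum.inr (Sum.inl x), m => X ThetaGen.mu ^ m * (X ThetaGen.u ^ x.1.1 * X (ThetaGen.a x.2))
  | Sum.inr (Sum.inr (Sum.inl _)), m => X ThetaGen.mu ^ m *
      (X ThetaGen.u ^ (p - 2) * X (ThetaGen.a ⟨p - 1, by have := hp0 (p := p); omega⟩))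
  | Sum.inr (Sum.inr (Sum.inr x)), m => X ThetaGen.mu ^ m *
      (X ThetaGen.u ^ x.1.1 * X (ThetaGen.b x.2.1))

variable {p}

lemma Phi_XMon (j : ThetaBasisIndex p) (m : ℕ) :
    Phi p (XMon p j m) = single (monFam p j m) 1 := by
  have h5 := hp5 (p := p)
  have hp' := hp0 (p := p)
  rcases j with ⟨i, hi⟩ | ⟨⟨i, hi⟩, jf⟩ | _ | ⟨⟨i, hi⟩, jf, hjf⟩
  · simp only [XMon, Phi, map_mul, map_pow, MvPolynomial.aeval_X, gTheta]
    rw [single_pow, single_pow, single_mul_single, Mon.powMu_el, Mon.powU_el hi,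
      Mon.el_mul_el_valid (by simp)
        (by
          show MonV p false (0 + i) (p * m + 0)
          rw [monV_false]
          refine ⟨by omega, Or.inl ?_⟩
          rw [Nat.add_zero, Nat.mul_mod_right])]
    simp only [one_pow, one_mul, monFam]
    congr 1
    exact Mon.el_eq_el (by simp) (by omega) (by omega)
  · simp only [XMon, Phi, map_mul, map_pow, MvPolynomial.aeval_X, gTheta]
    rw [single_pow, single_pow, single_mul_single, single_mul_single,
      Mon.powMu_el, Mon.powU_el (by omega), Mon.Am,
      Mon.el_mul_el_valid (by simp)
        (by
          show MonV p true (i + 0) (0 + jf.1)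
          rw [monV_true]; exact Or.inl (by omega)),
      Mon.el_mul_el_valid (by simp)
        (by
          show MonV p true (0 + (i + 0)) (p * m + (0 + jf.1))
          rw [monV_true]; exact Or.inl (by omega))]
    simp only [one_pow, one_mul, mul_one, monFam]
    congr 1
    exact Mon.el_eq_el (by simp) (by omega) (by omega)
  · simp only [XMon, Phi, map_mul, map_pow, MvPolynomial.aeval_X, gTheta]
    rw [single_pow, single_pow, single_mul_single, single_mul_single,
      Mon.powMu_el, Mon.powU_el (by omega), Mon.Am,
      Mon.el_mul_el_valid (by simp)
        (by
          show MonV p true (p - 2 + 0) (0 + (p - 1))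
          rw [monV_true]
          exact Or.inr ⟨by omega, by rw [Nat.zero_add, Nat.mod_eq_of_lt (by omega)]⟩),
      Mon.el_mul_el_valid (by simp)
        (by
          show MonV p true (0 + (p - 2 + 0)) (p * m + (0 + (p - 1)))
          rw [monV_true]
          refine Or.inr ⟨by omega, ?_⟩
          rw [Nat.zero_add]
          exact kmod (by omega) m)]
    simp only [one_pow, one_mul, mul_one, monFam]
    congr 1
    exact Mon.el_eq_el (by simp) (by omega) (by omega)
  · simp only [XMon, Phi, map_mul, map_pow, MvPolynomial.aeval_X, gTheta]
    rw [single_pow, single_pow, single_mul_single, single_mul_single,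
      Mon.powMu_el, Mon.powU_el (by omega), Mon.Bm,
      Mon.el_mul_el_valid (by simp)
        (by
          show MonV p false (i + 1) (0 + jf.1)
          rw [monV_false]
          exact ⟨by omega, Or.inr (by omega)⟩),
      Mon.el_mul_el_valid (by simp)
        (by
          show MonV p false (0 + (i + 1)) (p * m + (0 + jf.1))
          rw [monV_false]
          exact ⟨by omega, Or.inr (by omega)⟩)]
    simp only [one_pow, one_mul, mul_one, monFam]
    congr 1
    exact Mon.el_eq_el (by simp) (by omega) (by omega)

end Aux

namespace Aux
open MvPolynomial

variable (p : ℕ) [NeZero p] [Fact (5 ≤ p)]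

/-- The quotient map onto `Θ` as an algebra hom. -/
def mkT : MvPolynomial (ThetaGen p) (ZMod p) →ₐ[ZMod p] Theta p :=
  Ideal.Quotient.mkₐ (ZMod p) (Ideal.span (thetaRels p))

lemma rel_zero {r : MvPolynomial (ThetaGen p) (ZMod p)} (hr : r ∈ thetaRels p) :
    mkT p r = 0 :=
  Ideal.Quotient.eq_zero_iff_mem.2 (Ideal.subset_span hr)

variable {p}

lemma relB0 : thetaB p 0 = thetaU p := by
  have := rel_zero (p := p) (Or.inl rfl)
  rw [map_sub, sub_eq_zero] at this
  exact this

lemma relU : thetaU p ^ (p - 1) = 0 := by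
  have := rel_zero (p := p) (Or.inr (Or.inl rfl))
  rw [map_pow] at this
  exact this

lemma relUA (i : Fin p) (hi : i.1 ≤ p - 2) : thetaU p ^ (p - 2) * thetaA p i = 0 := by
  have := rel_zero (p := p) (Or.inr (Or.inr (Or.inl ⟨i, hi, rfl⟩)))
  rw [map_mul, map_pow] at this
  exact this

lemma relUB (j : Fin p) (hj : 1 ≤ j.1) : thetaU p ^ (p - 2) * thetaB p j = 0 := by
  have := rel_zero (p := p) (Or.inr (Or.inr (Or.inr (Or.inl ⟨j, hj, rfl⟩))))
  rw [map_mul, map_pow] at this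
  exact this

lemma relBB (i j k : Fin p) (hi : 1 ≤ i.1) (hj : 1 ≤ j.1) (hs : i.1 + j.1 ≤ p - 1)
    (hk : k.1 = i.1 + j.1) : thetaB p i * thetaB p j = thetaU p * thetaB p k := by
  have := rel_zero (p := p)
    (Or.inr (Or.inr (Or.inr (Or.inr (Or.inl ⟨i, j, k, hi, hj, hs, hk, rfl⟩)))))
  rw [map_sub, map_mul, map_mul, sub_eq_zero] at this
  exact this

lemma relAB (i j k : Fin p) (hj : 1 ≤ j.1) (hs : i.1 + j.1 ≤ p - 1)
    (hk : k.1 = i.1 + j.1) : thetaA p i * thetaB p j = thetaU p * thetaA p k := by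
  have := rel_zero (p := p)
    (Or.inr (Or.inr (Or.inr (Or.inr (Or.inr (Or.inl ⟨i, j, k, hj, hs, hk, rfl⟩))))))
  rw [map_sub, map_mul, map_mul, sub_eq_zero] at this
  exact this

lemma relBB' (i j k : Fin p) (hi : 1 ≤ i.1) (hj : 1 ≤ j.1) (hs : p ≤ i.1 + j.1)
    (hk : k.1 + p = i.1 + j.1) :
    thetaB p i * thetaB p j = thetaU p * thetaMu p * thetaB p k := by
  have := rel_zero (p := p)
    (Or.inr (Or.inr (Or.inr (Or.inr (Or.inr (Or.inr
      (Or.inl ⟨i, j, k, hi, hj, hs, hk, rfl⟩)))))))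
  rw [map_sub, map_mul, map_mul, map_mul, sub_eq_zero] at this
  exact this

lemma relAB' (i j k : Fin p) (hj : 1 ≤ j.1) (hs : p ≤ i.1 + j.1)
    (hk : k.1 + p = i.1 + j.1) :
    thetaA p i * thetaB p j = thetaU p * thetaMu p * thetaA p k := by
  have := rel_zero (p := p)
    (Or.inr (Or.inr (Or.inr (Or.inr (Or.inr (Or.inr (Or.inr
      (Or.inl ⟨i, j, k, hj, hs, hk, rfl⟩))))))))
  rw [map_sub, map_mul, map_mul, map_mul, sub_eq_zero] at this
  exact this

lemma relAA (i j : Fin p) : thetaA p i * thetaA p j = 0 := by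
  have := rel_zero (p := p)
    (Or.inr (Or.inr (Or.inr (Or.inr (Or.inr (Or.inr (Or.inr (Or.inr ⟨i, j, rfl⟩))))))))
  rw [map_mul] at this
  exact this

end Aux

namespace Aux
open MvPolynomial

variable (p : ℕ) [NeZero p] [Fact (5 ≤ p)]

/-- The basis family in `Θ`. -/
def vFam : ThetaBasisIndex p → Theta p
  | Sum.inl i => thetaU p ^ i.1
  | Sum.inr (Sum.inl x) => thetaU p ^ x.1.1 * thetaA p x.2
  | Sum.inr (Sum.inr (Sum.inl _)) =>
      thetaU p ^ (p - 2) * thetaA p ⟨p - 1, by have := hp0 (p := p); omega⟩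
  | Sum.inr (Sum.inr (Sum.inr x)) => thetaU p ^ x.1.1 * thetaB p x.2.1

lemma mkT_XMon (j : ThetaBasisIndex p) (m : ℕ) :
    mkT p (XMon p j m) = thetaMu p ^ m * vFam p j := by
  rcases j with i | x | u | x <;>
    simp only [XMon, map_mul, map_pow, vFam] <;> rfl

lemma li_iff_aux {ι R A : Type*} [CommRing R] [CommRing A] [Algebra R A] {v : ι → A} :
    LinearIndependent R v ↔
      ∀ (s : Finset ι) (g : ι → R), ∑ i ∈ s, g i • v i = 0 → ∀ i ∈ s, g i = 0 :=
  linearIndependent_iff'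

/-- Linear independence over `F_p` of the family `μ^m · v_j`. -/
lemma w_li : LinearIndependent (ZMod p)
    (fun jm : ThetaBasisIndex p × ℕ => thetaMu p ^ jm.2 * vFam p jm.1) := by
  classical
  refine li_iff_aux.2 ?_
  intro s g hsum j hjs
  -- push the relation into the model
  have hP : mkT p (∑ jm ∈ s, g jm • XMon p jm.1 jm.2) = 0 := by
    rw [map_sum]
    simp_rw [map_smul, mkT_XMon]
    exact hsum
  have hmem : (∑ jm ∈ s, g jm • XMon p jm.1 jm.2) ∈ Ideal.span (thetaRels p) := by
    rw [← Ideal.Quotient.eq_zero_iff_mem]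
    exact hP
  have h0 : ell0 p (Phi p (∑ jm ∈ s, g jm • XMon p jm.1 jm.2)) = 0 :=
    ell0_Phi_ideal hmem
  rw [map_sum] at h0
  simp_rw [map_smul, Phi_XMon] at h0
  rw [map_sum] at h0
  simp_rw [map_smul, ell0_single (monFam_ne_zero _ _)] at h0
  -- linear independence of the single family
  have hsingles : LinearIndependent (ZMod p)
      (fun jm : ThetaBasisIndex p × ℕ =>
        Finsupp.single (⟨monFam p jm.1 jm.2, monFam_ne_zero _ _⟩ : Mon' p) (1 : ZMod p)) := by
    have hb := (Finsupp.basisSingleOne (ι := Mon' p) (R := ZMod p)).linearIndependent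
    have hinj : Function.Injective
        (fun jm : ThetaBasisIndex p × ℕ =>
          (⟨monFam p jm.1 jm.2, monFam_ne_zero _ _⟩ : Mon' p)) := by
      intro a b hab
      exact monFam_inj (congrArg Subtype.val hab)
    have := hb.comp _ hinj
    exact this
  exact linearIndependent_iff'.1 hsingles s g h0 j hjs

end Aux

namespace Aux
open MvPolynomial

variable (p : ℕ) [NeZero p] [Fact (5 ≤ p)]

/-- The coefficient subalgebra `F_p[μ]`. -/
abbrev Rsub : Subalgebra (ZMod p) (Theta p) := Algebra.adjoin (ZMod p) {thetaMu p}

/-- The span of the basis family over `F_p[μ]`. -/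
def Ssub : Submodule (Rsub p) (Theta p) := Submodule.span (Rsub p) (Set.range (vFam p))

lemma hMu_mem : thetaMu p ∈ Rsub p := Algebra.subset_adjoin rfl

lemma vmem (j : ThetaBasisIndex p) : vFam p j ∈ Ssub p :=
  Submodule.subset_span ⟨j, rfl⟩

lemma muPow_smul_mem {x : Theta p} (hx : x ∈ Ssub p) (m : ℕ) :
    thetaMu p ^ m * x ∈ Ssub p := by
  have h := Submodule.smul_mem (Ssub p)
    (⟨thetaMu p ^ m, pow_mem (hMu_mem p) m⟩ : Rsub p) hx
  have he : (⟨thetaMu p ^ m, pow_mem (hMu_mem p) m⟩ : Rsub p) • x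
      = thetaMu p ^ m * x := rfl
  rwa [he] at h

lemma monU_mem (m i : ℕ) : thetaMu p ^ m * thetaU p ^ i ∈ Ssub p := by
  have h5 := hp5 (p := p)
  by_cases hi : i ≤ p - 2
  · exact muPow_smul_mem p (vmem p (Sum.inl ⟨i, hi⟩)) m
  · have hz : thetaU p ^ i = 0 := by
      rw [show i = (p - 1) + (i - (p - 1)) by omega, pow_add, relU, zero_mul]
    rw [hz, mul_zero]
    exact (Ssub p).zero_mem

lemma monA_mem (m i : ℕ) (j : Fin p) :
    thetaMu p ^ m * (thetaU p ^ i * thetaA p j) ∈ Ssub p := by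
  have h5 := hp5 (p := p)
  by_cases h1 : i ≤ p - 3
  · exact muPow_smul_mem p (vmem p (Sum.inr (Sum.inl (⟨i, h1⟩, j)))) m
  · by_cases h2 : i = p - 2
    · by_cases h3 : j.1 = p - 1
      · have hj : j = ⟨p - 1, by have := hp0 (p := p); omega⟩ := Fin.ext h3
        subst h2
        rw [hj]
        exact muPow_smul_mem p (vmem p (Sum.inr (Sum.inr (Sum.inl ())))) m
      · have hj2 : j.1 ≤ p - 2 := by have := j.isLt; omega
        subst h2
        rw [relUA j hj2, mul_zero]
        exact (Ssub p).zero_mem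
    · -- i ≥ p - 1
      have hz : thetaU p ^ i = 0 := by
        rw [show i = (p - 1) + (i - (p - 1)) by omega, pow_add, relU, zero_mul]
      rw [hz, zero_mul, mul_zero]
      exact (Ssub p).zero_mem

lemma monB_mem (m i : ℕ) (j : Fin p) :
    thetaMu p ^ m * (thetaU p ^ i * thetaB p j) ∈ Ssub p := by
  have h5 := hp5 (p := p)
  by_cases hj0 : j = 0
  · subst hj0
    rw [relB0, ← pow_succ]
    exact monU_mem p m (i + 1)
  · have hj : 1 ≤ j.1 := by
      have := j.isLt
      rcases Nat.eq_zero_or_pos j.1 with h | h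
      · exact absurd (Fin.ext h) hj0
      · exact h
    by_cases h1 : i ≤ p - 3
    · exact muPow_smul_mem p (vmem p (Sum.inr (Sum.inr (Sum.inr (⟨i, h1⟩, ⟨j, hj⟩))))) m
    · have hsplit : thetaU p ^ i * thetaB p j
          = thetaU p ^ (i - (p - 2)) * (thetaU p ^ (p - 2) * thetaB p j) := by
        rw [← mul_assoc, ← pow_add]
        congr 2
        omega
      rw [hsplit, relUB j hj, mul_zero, mul_zero]
      exact (Ssub p).zero_mem

lemma prodAA (i i' : ℕ) (j j' : Fin p) :
    (thetaU p ^ i * thetaA p j) * (thetaU p ^ i' * thetaA p j') ∈ Ssub p := by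
  have h : (thetaU p ^ i * thetaA p j) * (thetaU p ^ i' * thetaA p j')
      = thetaU p ^ (i + i') * (thetaA p j * thetaA p j') := by ring
  rw [h, relAA, mul_zero]
  exact (Ssub p).zero_mem

lemma prodAB (i i' : ℕ) (j j' : Fin p) (hj' : 1 ≤ j'.1) :
    (thetaU p ^ i * thetaA p j) * (thetaU p ^ i' * thetaB p j') ∈ Ssub p := by
  have h5 := hp5 (p := p)
  have hjlt := j.isLt
  have hjlt' := j'.isLt
  have h : (thetaU p ^ i * thetaA p j) * (thetaU p ^ i' * thetaB p j')
      = thetaU p ^ (i + i') * (thetaA p j * thetaB p j') := by ring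
  rw [h]
  by_cases hs : j.1 + j'.1 ≤ p - 1
  · rw [relAB j j' ⟨j.1 + j'.1, by omega⟩ hj' hs rfl]
    have h2 : thetaU p ^ (i + i') * (thetaU p * thetaA p ⟨j.1 + j'.1, by omega⟩)
        = thetaMu p ^ 0 * (thetaU p ^ (i + i' + 1) * thetaA p ⟨j.1 + j'.1, by omega⟩) := by
      ring
    rw [h2]
    exact monA_mem p 0 (i + i' + 1) _
  · rw [relAB' j j' ⟨j.1 + j'.1 - p, by omega⟩ hj' (by omega)
      (by show (j.1 + j'.1 - p) + p = j.1 + j'.1; omega)]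
    have h2 : thetaU p ^ (i + i') *
          (thetaU p * thetaMu p * thetaA p ⟨j.1 + j'.1 - p, by omega⟩)
        = thetaMu p ^ 1 * (thetaU p ^ (i + i' + 1) * thetaA p ⟨j.1 + j'.1 - p, by omega⟩) := by
      ring
    rw [h2]
    exact monA_mem p 1 (i + i' + 1) _

lemma prodBB (i i' : ℕ) (j j' : Fin p) (hj : 1 ≤ j.1) (hj' : 1 ≤ j'.1) :
    (thetaU p ^ i * thetaB p j) * (thetaU p ^ i' * thetaB p j') ∈ Ssub p := by
  have h5 := hp5 (p := p)
  have hjlt := j.isLt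
  have hjlt' := j'.isLt
  have h : (thetaU p ^ i * thetaB p j) * (thetaU p ^ i' * thetaB p j')
      = thetaU p ^ (i + i') * (thetaB p j * thetaB p j') := by ring
  rw [h]
  by_cases hs : j.1 + j'.1 ≤ p - 1
  · rw [relBB j j' ⟨j.1 + j'.1, by omega⟩ hj hj' hs rfl]
    have h2 : thetaU p ^ (i + i') * (thetaU p * thetaB p ⟨j.1 + j'.1, by omega⟩)
        = thetaMu p ^ 0 * (thetaU p ^ (i + i' + 1) * thetaB p ⟨j.1 + j'.1, by omega⟩) := by
      ring
    rw [h2]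
    exact monB_mem p 0 (i + i' + 1) _
  · rw [relBB' j j' ⟨j.1 + j'.1 - p, by omega⟩ hj hj' (by omega)
      (by show (j.1 + j'.1 - p) + p = j.1 + j'.1; omega)]
    have h2 : thetaU p ^ (i + i') *
          (thetaU p * thetaMu p * thetaB p ⟨j.1 + j'.1 - p, by omega⟩)
        = thetaMu p ^ 1 * (thetaU p ^ (i + i' + 1) * thetaB p ⟨j.1 + j'.1 - p, by omega⟩) := by
      ring
    rw [h2]
    exact monB_mem p 1 (i + i' + 1) _

lemma prodUX (i : ℕ) (j2 : ThetaBasisIndex p) :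
    thetaU p ^ i * vFam p j2 ∈ Ssub p := by
  rcases j2 with i' | x | _ | x
  · rw [show thetaU p ^ i * vFam p (Sum.inl i') =
      thetaMu p ^ 0 * thetaU p ^ (i + i'.1) from by simp [vFam]; ring]
    exact monU_mem p 0 _
  · rw [show thetaU p ^ i * vFam p (Sum.inr (Sum.inl x)) =
      thetaMu p ^ 0 * (thetaU p ^ (i + x.1.1) * thetaA p x.2) from by simp [vFam]; ring]
    exact monA_mem p 0 _ _
  · rw [show thetaU p ^ i * vFam p (Sum.inr (Sum.inr (Sum.inl ()))) =
      thetaMu p ^ 0 * (thetaU p ^ (i + (p - 2)) * thetaA p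
        ⟨p - 1, by have := hp0 (p := p); omega⟩) from by simp [vFam]; ring]
    exact monA_mem p 0 _ _
  · rw [show thetaU p ^ i * vFam p (Sum.inr (Sum.inr (Sum.inr x))) =
      thetaMu p ^ 0 * (thetaU p ^ (i + x.1.1) * thetaB p x.2.1) from by simp [vFam]; ring]
    exact monB_mem p 0 _ _

lemma prodMem (j1 j2 : ThetaBasisIndex p) : vFam p j1 * vFam p j2 ∈ Ssub p := by
  rcases j1 with i | x | _ | x
  · exact prodUX p i.1 j2
  · -- a-type times anything
    rcases j2 with i' | x' | _ | x'
    · rw [mul_comm]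
      exact prodUX p i'.1 _
    · exact prodAA p _ _ _ _
    · exact prodAA p _ _ _ _
    · exact prodAB p _ _ _ _ x'.2.2
  · rcases j2 with i' | x' | _ | x'
    · rw [mul_comm]
      exact prodUX p i'.1 _
    · exact prodAA p _ _ _ _
    · exact prodAA p _ _ _ _
    · exact prodAB p _ _ _ _ x'.2.2
  · rcases j2 with i' | x' | _ | x'
    · rw [mul_comm]
      exact prodUX p i'.1 _
    · rw [mul_comm]
      exact prodAB p _ _ _ _ x.2.2
    · rw [mul_comm]
      exact prodAB p _ _ _ _ x.2.2
    · exact prodBB p _ _ _ _ x.2.2 x'.2.2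

lemma Ssub_mul_mem {x y : Theta p} (hx : x ∈ Ssub p) (hy : y ∈ Ssub p) :
    x * y ∈ Ssub p := by
  have hle : Ssub p * Ssub p ≤ Ssub p := by
    rw [Ssub, Submodule.span_mul_span]
    refine Submodule.span_le.2 ?_
    rintro z ⟨a, ⟨j1, rfl⟩, b, ⟨j2, rfl⟩, rfl⟩
    exact prodMem p j1 j2
  exact hle (Submodule.mul_mem_mul hx hy)

lemma Ssub_top (x : Theta p) : x ∈ Ssub p := by
  have h5 := hp5 (p := p)
  have hone : (1 : Theta p) ∈ Ssub p := by
    have h := vmem p (Sum.inl ⟨0, Nat.zero_le _⟩)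
    simpa [vFam] using h
  let E : Subalgebra (ZMod p) (Theta p) :=
    { carrier := Ssub p
      mul_mem' := fun hx hy => Ssub_mul_mem p hx hy
      one_mem' := hone
      add_mem' := fun hx hy => (Ssub p).add_mem hx hy
      zero_mem' := (Ssub p).zero_mem
      algebraMap_mem' := fun c => by
        have h := Algebra.algebraMap_eq_smul_one (R := ZMod p) (A := Theta p) c
        rw [h]
        exact (Ssub p).smul_of_tower_mem c hone }
  have hX : ∀ gn : ThetaGen p, mkT p (X gn) ∈ E := by
    intro gn
    cases gn with
    | u =>
      have h := monU_mem p 0 1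
      exact (by simpa using h : thetaU p ∈ Ssub p)
    | mu =>
      have h := monU_mem p 1 0
      exact (by simpa using h : thetaMu p ∈ Ssub p)
    | a i =>
      have h := monA_mem p 0 0 i
      exact (by simpa using h : thetaA p i ∈ Ssub p)
    | b j =>
      have h := monB_mem p 0 0 j
      exact (by simpa using h : thetaB p j ∈ Ssub p)
  have hle : Algebra.adjoin (ZMod p) (Set.range (X : ThetaGen p → _)) ≤
      E.comap (mkT p) := by
    rw [Algebra.adjoin_le_iff]
    rintro f ⟨gn, rfl⟩
    exact hX gn
  obtain ⟨f, rfl⟩ := Ideal.Quotient.mkₐ_surjective (ZMod p) (Ideal.span (thetaRels p)) x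
  have hf : f ∈ Algebra.adjoin (ZMod p) (Set.range (X : ThetaGen p → _)) := by
    rw [MvPolynomial.adjoin_range_X]
    trivial
  exact (Subalgebra.mem_comap _ _ _).mp (hle hf)

end Aux

namespace Aux

variable (p : ℕ) [NeZero p] [Fact (5 ≤ p)]

lemma v_li : LinearIndependent (Rsub p) (vFam p) := by
  classical
  refine li_iff_aux.2 ?_
  intro s g hsum j hjs
  have hrange : ∀ j0 : ThetaBasisIndex p, ∃ q : Polynomial (ZMod p),
      Polynomial.aeval (thetaMu p) q = (g j0 : Theta p) := by
    intro j0
    have hmem : (g j0 : Theta p) ∈ Algebra.adjoin (ZMod p) {thetaMu p} := (g j0).2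
    rw [Algebra.adjoin_singleton_eq_range_aeval] at hmem
    obtain ⟨q, hq⟩ := hmem
    exact ⟨q, hq⟩
  choose q hq using hrange
  set N := (s.sup fun j0 => (q j0).natDegree) + 1 with hN
  have hdeg : ∀ j0 ∈ s, (q j0).natDegree < N := fun j0 h =>
    Nat.lt_succ_of_le (Finset.le_sup (f := fun j0 => (q j0).natDegree) h)
  have hexp : ∀ j0 ∈ s, (g j0 : Theta p) * vFam p j0
      = ∑ m ∈ Finset.range N, (q j0).coeff m • (thetaMu p ^ m * vFam p j0) := by
    intro j0 hj0
    rw [← hq j0, Polynomial.aeval_eq_sum_range' (hdeg j0 hj0)]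
    exact (Finset.sum_mul _ _ _).trans (Finset.sum_congr rfl fun m _ => smul_mul_assoc _ _ _)
  have hsum2 : ∑ jm ∈ s ×ˢ Finset.range N,
      (q jm.1).coeff jm.2 • (thetaMu p ^ jm.2 * vFam p jm.1) = 0 := by
    rw [Finset.sum_product]
    calc ∑ j0 ∈ s, ∑ m ∈ Finset.range N, (q j0).coeff m • (thetaMu p ^ m * vFam p j0)
        = ∑ j0 ∈ s, (g j0 : Theta p) * vFam p j0 :=
          Finset.sum_congr rfl fun j0 hj0 => (hexp j0 hj0).symm
      _ = ∑ j0 ∈ s, g j0 • vFam p j0 := rfl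
      _ = 0 := hsum
  have hcoef := li_iff_aux.1 (w_li p) (s ×ˢ Finset.range N)
    (fun jm => (q jm.1).coeff jm.2) hsum2
  have hq0 : q j = 0 := by
    ext m
    by_cases hm : m < N
    · simpa using hcoef (j, m) (Finset.mem_product.2 ⟨hjs, Finset.mem_range.2 hm⟩)
    · have hlt : (q j).natDegree < m :=
        lt_of_lt_of_le (hdeg j hjs) (by omega : N ≤ m)
      simp [Polynomial.coeff_eq_zero_of_natDegree_lt hlt]
  have hg0 : (g j : Theta p) = 0 := by rw [← hq j, hq0, map_zero]
  exact Subtype.ext hg0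

end Aux
/-- For `p ≥ 5` prime, `Θ` is a free module over its subalgebra `F_p[μ]`
with basis `u^i` (`0 ≤ i ≤ p-2`), `u^i·a_j` (`0 ≤ i ≤ p-3`, `0 ≤ j ≤ p-1`),
`u^{p-2}·a_{p-1}`, and `u^i·b_j` (`0 ≤ i ≤ p-3`, `1 ≤ j ≤ p-1`). -/
theorem statement6 (p : ℕ) [NeZero p] (hp : p.Prime) (hp5 : 5 ≤ p) :
    ∃ bs : Module.Basis (ThetaBasisIndex p) (Algebra.adjoin (ZMod p) {thetaMu p}) (Theta p),
      (∀ i : {i : ℕ // i ≤ p - 2}, bs (Sum.inl i) = thetaU p ^ (i : ℕ)) ∧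
      (∀ x : {i : ℕ // i ≤ p - 3} × Fin p,
        bs (Sum.inr (Sum.inl x)) = thetaU p ^ (x.1 : ℕ) * thetaA p x.2) ∧
      (bs (Sum.inr (Sum.inr (Sum.inl Unit.unit))) =
        thetaU p ^ (p - 2) * thetaA p ⟨p - 1, by omega⟩) ∧
      (∀ x : {i : ℕ // i ≤ p - 3} × {j : Fin p // 1 ≤ (j : ℕ)},
        bs (Sum.inr (Sum.inr (Sum.inr x))) = thetaU p ^ (x.1 : ℕ) * thetaB p x.2) := by
  haveI : Fact (5 ≤ p) := ⟨hp5⟩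
  refine ⟨Module.Basis.mk (Aux.v_li p) (Submodule.eq_top_iff'.2 (Aux.Ssub_top p)).ge,
    fun i => ?_, fun x => ?_, ?_, fun x => ?_⟩ <;>
    exact Module.Basis.mk_apply _ _ _
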